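/- Fix E > 0, δ > 3 and s with 1/2 < s < (δ−2)/2. There exists m₀ > 2, depending only on δ and s, such that for every m ≥ m₀ the following holds: given any constant C > 0 (independent of r, h, τ and a), there exist τ₀ = τ₀(C) > 0 and h₀ = h₀(C) > 0 such that for τ = τ₀ h^{−1/3}, all 0 < h ≤ h₀, and all r > 0 with r ≠ a, one has A(r) − C B(r) ≥ −(E/2) μ'(r). -/

import Mathlib

open Real

/-- The weight function `μ` of Section 2 (with parameters `s` and `a = h^{-m}`). -/
noncomputable def muF (s a r : ℝ) : ℝ :=
  if r ≤ a then (r + 1) ^ 2 - 1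
  else (a + 1) ^ 2 - 1 + (a + 1) ^ (-(2 * s) + 1) - (r + 1) ^ (-(2 * s) + 1)

/-- The derivative `μ'` of the weight function (away from `r = a`). -/
noncomputable def muD (s a r : ℝ) : ℝ :=
  if r < a then 2 * (r + 1) else (2 * s - 1) * (r + 1) ^ (-(2 * s))

/-- The derivative `φ'` of the phase function (with parameters `τ` and `a`). -/
noncomputable def phiD (τ a r : ℝ) : ℝ :=
  if r ≤ a then τ * ((r + 1)⁻¹ - (a + 1)⁻¹) else 0

/-- The second derivative `φ''` of the phase function (away from `r = a`). -/
noncomputable def phiDD (τ a r : ℝ) : ℝ :=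
  if r < a then -τ * (r + 1) ^ (-(2 : ℝ)) else 0

/-- The phase function `φ(r) = ∫₀^r φ'(t) dt`. -/
noncomputable def phiF (τ a r : ℝ) : ℝ := ∫ t in (0 : ℝ)..r, phiD τ a t

/-- `A(r) = (μ φ'²)'(r)`. -/
noncomputable def AF (s τ a r : ℝ) : ℝ :=
  deriv (fun t => muF s a t * (phiD τ a t) ^ 2) r

/-- `B(r) = (μ(r)(h^{-1}(r+1)^{-δ} + |φ''(r)|))² / (h^{-1} φ'(r) μ(r) + μ'(r))`. -/
noncomputable def BF (δ s h τ a r : ℝ) : ℝ :=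
  (muF s a r * (h⁻¹ * (r + 1) ^ (-δ) + |phiDD τ a r|)) ^ 2 /
    (h⁻¹ * phiD τ a r * muF s a r + muD s a r)

private lemma AF_gt' {s τ a r : ℝ} (hra : a < r) : AF s τ a r = 0 := by
  have hev : (fun t => muF s a t * (phiD τ a t)^2) =ᶠ[nhds r] (fun _ => (0:ℝ)) := by
    filter_upwards [Ioi_mem_nhds hra] with t ht
    simp [phiD, not_le.2 (Set.mem_Ioi.1 ht)]
  rw [AF, hev.deriv_eq, deriv_const]

private lemma AF_lt' {s τ a r : ℝ} (h0 : 0 < r) (hra : r < a) :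
    AF s τ a r = 2 * τ^2 * ((r+1)⁻¹ - (a+1)⁻¹) * (((r+1)^2)⁻¹ - (a+1)⁻¹ * (r+1)) := by
  have hx0 : r + 1 ≠ 0 := by positivity
  have hev : (fun t => muF s a t * (phiD τ a t)^2) =ᶠ[nhds r]
      (fun t => ((t+1)^2 - 1) * (τ * ((t+1)⁻¹ - (a+1)⁻¹))^2) := by
    filter_upwards [Iio_mem_nhds hra] with t ht
    simp [muF, phiD, le_of_lt (Set.mem_Iio.1 ht)]
  have h1 : HasDerivAt (fun t : ℝ => t + 1) 1 r := (hasDerivAt_id r).add_const 1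
  have h2 : HasDerivAt (fun t : ℝ => (t+1)^2 - 1) (2*(r+1)) r := by
    have : HasDerivAt (fun t : ℝ => (t+1)^2 - 1) _ r := (h1.pow 2).sub_const 1
    convert this using 1
    push_cast; ring
  have h3 : HasDerivAt (fun t : ℝ => (t+1)⁻¹) (-1 / (r+1)^2) r := by
    have h3' : HasDerivAt (fun t : ℝ => (t+1)⁻¹) _ r := h1.inv hx0
    simpa using h3'
  have h4 : HasDerivAt (fun t : ℝ => τ * ((t+1)⁻¹ - (a+1)⁻¹)) (τ * (-1/(r+1)^2)) r :=
    (h3.sub_const _).const_mul τ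
  have h6 : HasDerivAt (fun t => ((t+1)^2 - 1) * (τ * ((t+1)⁻¹ - (a+1)⁻¹))^2) _ r :=
    h2.mul (h4.pow 2)
  rw [AF, hev.deriv_eq, h6.deriv]
  set c := (a+1)⁻¹ with hc
  push_cast
  field_simp
  ring

private lemma ev_le' {K c e : ℝ} (he : 0 < e) (hc : 0 < c) :
    ∀ᶠ h in nhdsWithin (0:ℝ) (Set.Ioi 0), K * h ^ e ≤ c := by
  have h0 : ContinuousAt (fun h : ℝ => K * h ^ e) 0 :=
    continuousAt_const.mul (Real.continuousAt_rpow_const 0 e (Or.inr he.le))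
  have h1 : Filter.Tendsto (fun h : ℝ => K * h ^ e) (nhdsWithin 0 (Set.Ioi 0)) (nhds 0) := by
    have := h0.tendsto
    rw [Real.zero_rpow he.ne', mul_zero] at this
    exact this.mono_left nhdsWithin_le_nhds
  exact h1.eventually_le_const hc

private lemma rpow_neg_two_eq' {x : ℝ} (hx : 0 < x) : x ^ (-(2:ℝ)) = (x^2)⁻¹ := by
  rw [Real.rpow_neg hx.le, show ((2:ℝ)) = ((2:ℕ):ℝ) by norm_num, Real.rpow_natCast]

set_option maxHeartbeats 1000000 in
private lemma case_lt_core (E C δ s h τ a y : ℝ)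
    (hE : 0 < E) (hC : C > 0) (hδ : 3 < δ)
    (hh : 0 < h) (hτ : 0 < τ) (ha1 : 1 ≤ a)
    (hy0 : 0 < y) (hy3 : (a+1)⁻¹ ≤ y^3)
    (hτcube : 16*C*h⁻¹ ≤ τ^3)
    (hc1 : 4*C*(τ*h) ≤ E)
    (hc2 : 2*τ^2*(a+1)⁻¹ ≤ E/3)
    (hc3 : 2*C*((h⁻¹)^2*(a+1)⁻¹) ≤ E/3)
    (hc4 : 2*C*(τ^2*y) ≤ E/3)
    (r : ℝ) (hr : 0 < r) (hra : r < a) :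
    AF s τ a r - C * BF δ s h τ a r ≥ -(E/2) * muD s a r := by
  have hhi : (0:ℝ) < h⁻¹ := by positivity
  have hx0 : (0:ℝ) < r + 1 := by linarith
  have hx1 : (1:ℝ) < r + 1 := by linarith
  have ha10 : (0:ℝ) < a + 1 := by linarith
  have hc0 : (0:ℝ) < (a+1)⁻¹ := by positivity
  have hf0 : (0:ℝ) < (r+1)⁻¹ - (a+1)⁻¹ :=
    sub_pos.2 (inv_strictAnti₀ hx0 (by linarith))
  have hmu0 : (0:ℝ) < (r+1)^2 - 1 := by
    have hrr : (r+1)^2 - 1 = r*(r+2) := by ring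
    rw [hrr]; exact mul_pos hr (by linarith)
  have hxinv : (r+1)⁻¹ * (r+1) = 1 := inv_mul_cancel₀ hx0.ne'
  have hxinv1 : (r+1)⁻¹ ≤ 1 := by
    have := inv_anti₀ one_pos hx1.le
    simpa using this
  have hmuFv : muF s a r = (r+1)^2 - 1 := if_pos hra.le
  have hmuDv : muD s a r = 2*(r+1) := if_pos hra
  have hphiDv : phiD τ a r = τ * ((r+1)⁻¹ - (a+1)⁻¹) := if_pos hra.le
  have habs : |phiDD τ a r| = τ * ((r+1)^2)⁻¹ := by
    rw [phiDD, if_pos hra, rpow_neg_two_eq' hx0, neg_mul, abs_neg,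
      abs_of_nonneg (by positivity)]
  have hAF : AF s τ a r = 2*τ^2*((r+1)⁻¹-(a+1)⁻¹)*(((r+1)^2)⁻¹ - (a+1)⁻¹*(r+1)) :=
    AF_lt' hr hra
  have hD0 : (0:ℝ) < h⁻¹ * (τ * ((r+1)⁻¹ - (a+1)⁻¹)) * ((r+1)^2-1) := by positivity
  have hD : (0:ℝ) < h⁻¹ * (τ * ((r+1)⁻¹ - (a+1)⁻¹)) * ((r+1)^2-1) + 2*(r+1) := by
    have : (0:ℝ) < 2*(r+1) := by linarith
    linarith [hD0]
  have hBF : BF δ s h τ a r =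
      (((r+1)^2-1) * (h⁻¹*(r+1)^(-δ) + τ*((r+1)^2)⁻¹))^2 /
        (h⁻¹ * (τ * ((r+1)⁻¹ - (a+1)⁻¹)) * ((r+1)^2-1) + 2*(r+1)) := by
    rw [BF, hmuFv, hmuDv, hphiDv, habs]
  -- split of B into the two squares
  have hsplit : BF δ s h τ a r ≤
      2*(((r+1)^2-1) * (h⁻¹*(r+1)^(-δ)))^2 /
        (h⁻¹ * (τ * ((r+1)⁻¹ - (a+1)⁻¹)) * ((r+1)^2-1) + 2*(r+1))
      + 2*(((r+1)^2-1) * (τ*((r+1)^2)⁻¹))^2 /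
        (h⁻¹ * (τ * ((r+1)⁻¹ - (a+1)⁻¹)) * ((r+1)^2-1) + 2*(r+1)) := by
    rw [hBF, ← add_div]
    apply (div_le_div_iff_of_pos_right hD).mpr
    linarith only [sq_nonneg ((((r+1)^2-1) * (h⁻¹*(r+1)^(-δ)))
      - (((r+1)^2-1)*(τ*((r+1)^2)⁻¹)))]
  have hCBF : C * BF δ s h τ a r ≤
      2*C*((((r+1)^2-1) * (h⁻¹*(r+1)^(-δ)))^2 /
        (h⁻¹ * (τ * ((r+1)⁻¹ - (a+1)⁻¹)) * ((r+1)^2-1) + 2*(r+1)))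
      + 2*C*((((r+1)^2-1) * (τ*((r+1)^2)⁻¹))^2 /
        (h⁻¹ * (τ * ((r+1)⁻¹ - (a+1)⁻¹)) * ((r+1)^2-1) + 2*(r+1))) := by
    calc C * BF δ s h τ a r
        ≤ C * (2*(((r+1)^2-1) * (h⁻¹*(r+1)^(-δ)))^2 /
            (h⁻¹ * (τ * ((r+1)⁻¹ - (a+1)⁻¹)) * ((r+1)^2-1) + 2*(r+1))
          + 2*(((r+1)^2-1) * (τ*((r+1)^2)⁻¹))^2 /
            (h⁻¹ * (τ * ((r+1)⁻¹ - (a+1)⁻¹)) * ((r+1)^2-1) + 2*(r+1))) :=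
          mul_le_mul_of_nonneg_left hsplit hC.le
      _ = 2*C*((((r+1)^2-1) * (h⁻¹*(r+1)^(-δ)))^2 /
            (h⁻¹ * (τ * ((r+1)⁻¹ - (a+1)⁻¹)) * ((r+1)^2-1) + 2*(r+1)))
          + 2*C*((((r+1)^2-1) * (τ*((r+1)^2)⁻¹))^2 /
            (h⁻¹ * (τ * ((r+1)⁻¹ - (a+1)⁻¹)) * ((r+1)^2-1) + 2*(r+1))) := by ring
  -- the rpow fact x^3 * (x^(-δ))^2 ≤ (x^3)⁻¹
  have hX : (r+1)^3 * ((r+1)^(-δ))^2 ≤ ((r+1)^3)⁻¹ := by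
    have u1 : ((r+1):ℝ)^(3:ℕ) * ((r+1)^(-δ))^2 = (r+1)^((3:ℝ) + (-δ)*2) := by
      rw [← Real.rpow_natCast ((r+1)^(-δ)) 2, ← Real.rpow_mul hx0.le,
        ← Real.rpow_natCast (r+1) 3, ← Real.rpow_add hx0]
      norm_num
    have u2 : (r+1)^((3:ℝ) + (-δ)*2) ≤ (r+1)^(-(3:ℝ)) :=
      Real.rpow_le_rpow_of_exponent_le hx1.le (by linarith)
    have u3 : ((r+1):ℝ)^(-(3:ℝ)) = ((r+1)^3)⁻¹ := by
      rw [Real.rpow_neg hx0.le, show ((3:ℝ)) = ((3:ℕ):ℝ) by norm_num,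
        Real.rpow_natCast]
    calc (r+1)^3 * ((r+1)^(-δ))^2 = (r+1)^((3:ℝ) + (-δ)*2) := u1
      _ ≤ (r+1)^(-(3:ℝ)) := u2
      _ = ((r+1)^3)⁻¹ := u3
  rcases le_or_gt ((a+1)⁻¹*(r+1)^3) (1/2) with hcx3 | hcx3
  · -- subcase (i) : small r
    have fi1 : (a+1)⁻¹*(r+1) ≤ 1/2 := by
      have : (r+1) ≤ (r+1)^3 := by
        have e : (r+1)^3 - (r+1) = (r+1)*(r*(r+2)) := by ring
        have e2 : (0:ℝ) ≤ (r+1)*(r*(r+2)) := by positivity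
        linarith only [e, e2]
      have h2 : (a+1)⁻¹*(r+1) ≤ (a+1)⁻¹*(r+1)^3 :=
        mul_le_mul_of_nonneg_left this hc0.le
      linarith only [h2, hcx3]
    have fi2 : 2*(a+1)⁻¹ ≤ (r+1)⁻¹ := by
      rw [show ((r+1):ℝ)⁻¹ = 1/(r+1) from (one_div _).symm, le_div_iff₀ hx0]
      linarith only [fi1]
    have fi3 : (a+1)⁻¹*(r+1) ≤ 1/2*((r+1)^2)⁻¹ := by
      rw [show (1:ℝ)/2*((r+1)^2)⁻¹ = (1/2)/((r+1)^2) from by ring,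
        le_div_iff₀ (by positivity : (0:ℝ) < (r+1)^2)]
      calc (a+1)⁻¹*(r+1)*(r+1)^2 = (a+1)⁻¹*(r+1)^3 := by ring
        _ ≤ 1/2 := hcx3
    have fAF : τ^2*(((r+1)^3)⁻¹)/2 ≤ AF s τ a r := by
      rw [hAF]
      have k2 : (((r+1):ℝ)^3)⁻¹ = ((r+1)^2)⁻¹ * (r+1)⁻¹ := by
        rw [← mul_inv]; ring_nf
      rw [k2]
      have b1 : (r+1)⁻¹/2 ≤ (r+1)⁻¹-(a+1)⁻¹ := by linarith only [fi2]
      have b2 : 1/2*((r+1)^2)⁻¹ ≤ ((r+1)^2)⁻¹ - (a+1)⁻¹*(r+1) := by linarith only [fi3]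
      calc τ^2*(((r+1)^2)⁻¹ * (r+1)⁻¹)/2 = 2*τ^2*((r+1)⁻¹/2)*(1/2*((r+1)^2)⁻¹) := by ring
        _ ≤ 2*τ^2*((r+1)⁻¹-(a+1)⁻¹)*(((r+1)^2)⁻¹ - (a+1)⁻¹*(r+1)) := by
            apply mul_le_mul ?_ b2 (by positivity) (by positivity)
            exact mul_le_mul_of_nonneg_left b1 (by positivity)
    -- T1
    have hT1 : 2*C*((((r+1)^2-1) * (h⁻¹*(r+1)^(-δ)))^2 /
        (h⁻¹ * (τ * ((r+1)⁻¹ - (a+1)⁻¹)) * ((r+1)^2-1) + 2*(r+1))) ≤ AF s τ a r / 2 := by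
      have q1 : (((r+1)^2-1) * (h⁻¹*(r+1)^(-δ)))^2 /
          (h⁻¹ * (τ * ((r+1)⁻¹ - (a+1)⁻¹)) * ((r+1)^2-1) + 2*(r+1)) ≤
          (((r+1)^2-1) * (h⁻¹*(r+1)^(-δ)))^2 /
          (h⁻¹ * (τ * ((r+1)⁻¹ - (a+1)⁻¹)) * ((r+1)^2-1)) :=
        div_le_div_of_nonneg_left (sq_nonneg _) hD0 (by linarith)
      have htf : (τ*((r+1)⁻¹-(a+1)⁻¹)) * (τ*((r+1)⁻¹-(a+1)⁻¹))⁻¹ = 1 :=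
        mul_inv_cancel₀ (by positivity)
      have q2 : (((r+1)^2-1) * (h⁻¹*(r+1)^(-δ)))^2 /
          (h⁻¹ * (τ * ((r+1)⁻¹ - (a+1)⁻¹)) * ((r+1)^2-1))
          = ((r+1)^2-1) * h⁻¹ * ((r+1)^(-δ))^2 * (τ*((r+1)⁻¹-(a+1)⁻¹))⁻¹ := by
        rw [div_eq_iff hD0.ne']
        linear_combination (-(((r+1)^2-1)^2 * (h⁻¹)^2 * ((r+1)^(-δ))^2)) * htf
      have q3 : (τ*((r+1)⁻¹-(a+1)⁻¹))⁻¹ ≤ 2*(r+1)/τ := by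
        have e0 : (τ*((r+1)⁻¹/2))⁻¹ = 2*(r+1)/τ := by
          field_simp
        rw [← e0]
        apply inv_anti₀ (by positivity)
        apply mul_le_mul_of_nonneg_left _ hτ.le
        linarith only [fi2]
      have q4 : ((r+1)^2-1) * h⁻¹ * ((r+1)^(-δ))^2 * (τ*((r+1)⁻¹-(a+1)⁻¹))⁻¹ ≤
          (r+1)^2 * h⁻¹ * ((r+1)^(-δ))^2 * (2*(r+1)/τ) := by
        apply mul_le_mul ?_ q3 (by positivity) (by positivity)
        apply mul_le_mul_of_nonneg_right _ (by positivity)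
        apply mul_le_mul_of_nonneg_right _ (by positivity)
        linarith
      have q45 : (r+1)^2 * h⁻¹ * ((r+1)^(-δ))^2 * (2*(r+1)/τ)
          = 2*h⁻¹*((r+1)^3 * ((r+1)^(-δ))^2)/τ := by ring
      have q6 : 2*h⁻¹*((r+1)^3 * ((r+1)^(-δ))^2)/τ ≤ 2*h⁻¹*(((r+1)^3)⁻¹)/τ := by
        apply (div_le_div_iff_of_pos_right hτ).mpr
        exact mul_le_mul_of_nonneg_left hX (by positivity)
      have q5 : 2*C*(2*h⁻¹*(((r+1)^3)⁻¹)/τ) ≤ τ^2/4*(((r+1)^3)⁻¹) := by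
        have e1 : 2*C*(2*h⁻¹*(((r+1)^3)⁻¹)/τ) = (4*C*h⁻¹/τ)*(((r+1)^3)⁻¹) := by ring
        rw [e1]
        apply mul_le_mul_of_nonneg_right _ (by positivity)
        rw [div_le_iff₀ hτ]
        have e2 : τ^2/4*τ = τ^3/4 := by ring
        rw [e2]
        linarith only [hτcube]
      calc 2*C*((((r+1)^2-1) * (h⁻¹*(r+1)^(-δ)))^2 /
            (h⁻¹ * (τ * ((r+1)⁻¹ - (a+1)⁻¹)) * ((r+1)^2-1) + 2*(r+1)))
          ≤ 2*C*(((r+1)^2-1) * h⁻¹ * ((r+1)^(-δ))^2 * (τ*((r+1)⁻¹-(a+1)⁻¹))⁻¹) := by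
            rw [← q2]
            exact mul_le_mul_of_nonneg_left q1 (by positivity)
        _ ≤ 2*C*(2*h⁻¹*(((r+1)^3)⁻¹)/τ) := by
            apply mul_le_mul_of_nonneg_left _ (by positivity)
            calc ((r+1)^2-1) * h⁻¹ * ((r+1)^(-δ))^2 * (τ*((r+1)⁻¹-(a+1)⁻¹))⁻¹
                ≤ (r+1)^2 * h⁻¹ * ((r+1)^(-δ))^2 * (2*(r+1)/τ) := q4
              _ = 2*h⁻¹*((r+1)^3 * ((r+1)^(-δ))^2)/τ := q45
              _ ≤ 2*h⁻¹*(((r+1)^3)⁻¹)/τ := q6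
        _ ≤ τ^2/4*(((r+1)^3)⁻¹) := q5
        _ ≤ AF s τ a r / 2 := by linarith only [fAF]
    -- T2
    have hT2 : 2*C*((((r+1)^2-1) * (τ*((r+1)^2)⁻¹))^2 /
        (h⁻¹ * (τ * ((r+1)⁻¹ - (a+1)⁻¹)) * ((r+1)^2-1) + 2*(r+1))) ≤ E := by
      have q1 : (((r+1)^2-1) * (τ*((r+1)^2)⁻¹))^2 /
          (h⁻¹ * (τ * ((r+1)⁻¹ - (a+1)⁻¹)) * ((r+1)^2-1) + 2*(r+1)) ≤
          (((r+1)^2-1) * (τ*((r+1)^2)⁻¹))^2 /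
          (h⁻¹ * (τ * ((r+1)⁻¹ - (a+1)⁻¹)) * ((r+1)^2-1)) :=
        div_le_div_of_nonneg_left (sq_nonneg _) hD0 (by linarith)
      have hhh : h * h⁻¹ = 1 := mul_inv_cancel₀ hh.ne'
      have hFF : ((r+1)⁻¹-(a+1)⁻¹) * ((r+1)⁻¹-(a+1)⁻¹)⁻¹ = 1 := mul_inv_cancel₀ hf0.ne'
      have q2 : (((r+1)^2-1) * (τ*((r+1)^2)⁻¹))^2 /
          (h⁻¹ * (τ * ((r+1)⁻¹ - (a+1)⁻¹)) * ((r+1)^2-1))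
          = ((r+1)^2-1) * τ * h * (((r+1)^2)⁻¹)^2 * ((r+1)⁻¹-(a+1)⁻¹)⁻¹ := by
        rw [div_eq_iff hD0.ne']
        linear_combination (-((((r+1)^2-1)^2*τ^2*(((r+1)^2)⁻¹)^2)
            * (((r+1)⁻¹-(a+1)⁻¹) * ((r+1)⁻¹-(a+1)⁻¹)⁻¹))) * hhh
          + (-((((r+1)^2-1)^2*τ^2*(((r+1)^2)⁻¹)^2))) * hFF
      have q3 : ((r+1)⁻¹-(a+1)⁻¹)⁻¹ ≤ 2*(r+1) := by
        have e0 : ((r+1)⁻¹/2)⁻¹ = 2*(r+1) := by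
          field_simp
        rw [← e0]
        apply inv_anti₀ (by positivity)
        linarith only [fi2]
      have q4 : ((r+1)^2-1) * τ * h * (((r+1)^2)⁻¹)^2 * ((r+1)⁻¹-(a+1)⁻¹)⁻¹ ≤
          (r+1)^2 * τ * h * (((r+1)^2)⁻¹)^2 * (2*(r+1)) := by
        apply mul_le_mul ?_ q3 (by positivity) (by positivity)
        apply mul_le_mul_of_nonneg_right _ (by positivity)
        apply mul_le_mul_of_nonneg_right _ hh.le
        apply mul_le_mul_of_nonneg_right _ hτ.le
        linarith
      have q5 : (r+1)^2 * τ * h * (((r+1)^2)⁻¹)^2 * (2*(r+1)) = 2*(τ*h)*(r+1)⁻¹ := by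
        field_simp
      have q6 : 2*(τ*h)*(r+1)⁻¹ ≤ 2*(τ*h) := by
        calc 2*(τ*h)*(r+1)⁻¹ = (2*(τ*h))*(r+1)⁻¹ := by ring
          _ ≤ (2*(τ*h))*1 := mul_le_mul_of_nonneg_left hxinv1 (by positivity)
          _ = 2*(τ*h) := by ring
      calc 2*C*((((r+1)^2-1) * (τ*((r+1)^2)⁻¹))^2 /
            (h⁻¹ * (τ * ((r+1)⁻¹ - (a+1)⁻¹)) * ((r+1)^2-1) + 2*(r+1)))
          ≤ 2*C*(((r+1)^2-1) * τ * h * (((r+1)^2)⁻¹)^2 * ((r+1)⁻¹-(a+1)⁻¹)⁻¹) := by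
            rw [← q2]
            exact mul_le_mul_of_nonneg_left q1 (by positivity)
        _ ≤ 2*C*(2*(τ*h)) := by
            apply mul_le_mul_of_nonneg_left _ (by positivity)
            calc ((r+1)^2-1) * τ * h * (((r+1)^2)⁻¹)^2 * ((r+1)⁻¹-(a+1)⁻¹)⁻¹
                ≤ (r+1)^2 * τ * h * (((r+1)^2)⁻¹)^2 * (2*(r+1)) := q4
              _ = 2*(τ*h)*(r+1)⁻¹ := q5
              _ ≤ 2*(τ*h) := q6
        _ = 4*C*(τ*h) := by ring
        _ ≤ E := hc1
    -- assemble
    have hAF0 : 0 ≤ AF s τ a r := le_trans (by positivity) fAF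
    rw [hmuDv]
    have hEr : 0 ≤ E*r := mul_nonneg hE.le hr.le
    linarith only [hCBF, hT1, hT2, hAF0, hEr]
  · -- subcase (ii) : large r
    have gii1 : (((r+1):ℝ)^3)⁻¹ ≤ 2*(a+1)⁻¹ := by
      rw [inv_eq_one_div, div_le_iff₀ (by positivity : (0:ℝ) < (r+1)^3)]
      have hq : (1:ℝ) < 2*(a+1)⁻¹*(r+1)^3 := by
        have : 2*((a+1)⁻¹*(r+1)^3) = 2*(a+1)⁻¹*(r+1)^3 := by ring
        linarith only [hcx3, this]
      linarith only [hq]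
    -- lower bound for AF
    have hfx : ((r+1)⁻¹-(a+1)⁻¹)*(r+1) = 1 - (a+1)⁻¹*(r+1) := by
      rw [sub_mul, hxinv]
    have gAF : -(2*τ^2*(a+1)⁻¹) ≤ AF s τ a r := by
      rw [hAF]
      have t1 : (0:ℝ) ≤ 2*τ^2*(((r+1)⁻¹-(a+1)⁻¹)*((r+1)^2)⁻¹
          + (a+1)⁻¹*((a+1)⁻¹*(r+1))) := by positivity
      have t2 : 2*τ^2*((r+1)⁻¹-(a+1)⁻¹)*(((r+1)^2)⁻¹ - (a+1)⁻¹*(r+1)) + 2*τ^2*(a+1)⁻¹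
          = 2*τ^2*(((r+1)⁻¹-(a+1)⁻¹)*((r+1)^2)⁻¹ + (a+1)⁻¹*((a+1)⁻¹*(r+1))) := by
        linear_combination (-(2*τ^2*(a+1)⁻¹)) * hfx
      linarith only [t1, t2]
    -- powers of h
    -- T1
    have hT1 : 2*C*((((r+1)^2-1) * (h⁻¹*(r+1)^(-δ)))^2 /
        (h⁻¹ * (τ * ((r+1)⁻¹ - (a+1)⁻¹)) * ((r+1)^2-1) + 2*(r+1))) ≤ E/3 := by
      have q1 : (((r+1)^2-1) * (h⁻¹*(r+1)^(-δ)))^2 /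
          (h⁻¹ * (τ * ((r+1)⁻¹ - (a+1)⁻¹)) * ((r+1)^2-1) + 2*(r+1)) ≤
          (((r+1)^2-1) * (h⁻¹*(r+1)^(-δ)))^2 / (2*(r+1)) :=
        div_le_div_of_nonneg_left (sq_nonneg _) (by positivity) (by linarith)
      have q2 : (((r+1)^2-1) * (h⁻¹*(r+1)^(-δ)))^2 / (2*(r+1)) ≤
          ((r+1)^2 * (h⁻¹*(r+1)^(-δ)))^2 / (2*(r+1)) := by
        apply (div_le_div_iff_of_pos_right (by positivity : (0:ℝ) < 2*(r+1))).mpr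
        have hb : ((r+1)^2-1) * (h⁻¹*(r+1)^(-δ)) ≤ (r+1)^2 * (h⁻¹*(r+1)^(-δ)) := by
          apply mul_le_mul_of_nonneg_right _ (by positivity)
          linarith
        exact pow_le_pow_left₀ (by positivity) hb 2
      have q3 : ((r+1)^2 * (h⁻¹*(r+1)^(-δ)))^2 / (2*(r+1)) =
          (h⁻¹)^2*((r+1)^3*((r+1)^(-δ))^2)/2 := by
        field_simp
      have q4 : (h⁻¹)^2*((r+1)^3*((r+1)^(-δ))^2)/2 ≤ (h⁻¹)^2*(2*(a+1)⁻¹)/2 := by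
        apply (div_le_div_iff_of_pos_right (by norm_num : (0:ℝ) < 2)).mpr
        apply mul_le_mul_of_nonneg_left _ (by positivity)
        exact le_trans hX gii1
      have q5 : (h⁻¹)^2*(2*(a+1)⁻¹)/2 = (h⁻¹)^2*(a+1)⁻¹ := by ring
      calc 2*C*((((r+1)^2-1) * (h⁻¹*(r+1)^(-δ)))^2 /
            (h⁻¹ * (τ * ((r+1)⁻¹ - (a+1)⁻¹)) * ((r+1)^2-1) + 2*(r+1)))
          ≤ 2*C*((h⁻¹)^2*(a+1)⁻¹) := by
            apply mul_le_mul_of_nonneg_left _ (by positivity)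
            rw [← q5]
            exact le_trans q1 (le_trans q2 (le_trans (le_of_eq q3) q4))
        _ ≤ E/3 := hc3
    -- T2
    have hT2 : 2*C*((((r+1)^2-1) * (τ*((r+1)^2)⁻¹))^2 /
        (h⁻¹ * (τ * ((r+1)⁻¹ - (a+1)⁻¹)) * ((r+1)^2-1) + 2*(r+1))) ≤ E/3 := by
      have hy3pos : (0:ℝ) < y^3 := by positivity
      have hxinv3 : (r+1)⁻¹ ≤ 2*y := by
        by_contra hcon
        push_neg at hcon
        have c1 : (2*y)^(3:ℕ) < ((r+1)⁻¹)^(3:ℕ) :=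
          pow_lt_pow_left₀ hcon (by positivity) (by norm_num)
        have c2 : (((r+1):ℝ)⁻¹)^(3:ℕ) = ((r+1)^3)⁻¹ := by rw [← inv_pow]
        have c3 : ((2*y):ℝ)^(3:ℕ) = 8*y^3 := by ring
        have c4 : (((r+1):ℝ)^3)⁻¹ ≤ 2*(y^3) := by
          calc (((r+1):ℝ)^3)⁻¹ ≤ 2*(a+1)⁻¹ := gii1
            _ ≤ 2*(y^3) := by linarith only [hy3]
        rw [c2, c3] at c1
        linarith only [c1, c4, hy3pos]
      have q1 : (((r+1)^2-1) * (τ*((r+1)^2)⁻¹))^2 /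
          (h⁻¹ * (τ * ((r+1)⁻¹ - (a+1)⁻¹)) * ((r+1)^2-1) + 2*(r+1)) ≤
          (((r+1)^2-1) * (τ*((r+1)^2)⁻¹))^2 / (2*(r+1)) :=
        div_le_div_of_nonneg_left (sq_nonneg _) (by positivity) (by linarith)
      have q2 : (((r+1)^2-1) * (τ*((r+1)^2)⁻¹))^2 / (2*(r+1)) ≤
          ((r+1)^2 * (τ*((r+1)^2)⁻¹))^2 / (2*(r+1)) := by
        apply (div_le_div_iff_of_pos_right (by positivity : (0:ℝ) < 2*(r+1))).mpr
        have hb : ((r+1)^2-1) * (τ*((r+1)^2)⁻¹) ≤ (r+1)^2 * (τ*((r+1)^2)⁻¹) := by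
          apply mul_le_mul_of_nonneg_right _ (by positivity)
          linarith
        exact pow_le_pow_left₀ (by positivity) hb 2
      have q3 : ((r+1)^2 * (τ*((r+1)^2)⁻¹))^2 / (2*(r+1)) = τ^2*(r+1)⁻¹/2 := by
        field_simp
      have q4 : τ^2*(r+1)⁻¹/2 ≤ τ^2*y := by
        have e : τ^2*(r+1)⁻¹ ≤ τ^2*(2*y) :=
          mul_le_mul_of_nonneg_left hxinv3 (by positivity)
        linarith only [e]
      calc 2*C*((((r+1)^2-1) * (τ*((r+1)^2)⁻¹))^2 /
            (h⁻¹ * (τ * ((r+1)⁻¹ - (a+1)⁻¹)) * ((r+1)^2-1) + 2*(r+1)))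
          ≤ 2*C*(τ^2*y) := by
            apply mul_le_mul_of_nonneg_left _ (by positivity)
            exact le_trans q1 (le_trans q2 (le_trans (le_of_eq q3) q4))
        _ ≤ E/3 := hc4
    -- assemble
    rw [hmuDv]
    have hEr : 0 ≤ E*r := mul_nonneg hE.le hr.le
    linarith only [hCBF, hT1, hT2, gAF, hc2, hEr]

set_option maxHeartbeats 2000000 in
theorem statement6 (E δ s : ℝ) (hE : 0 < E) (hδ : 3 < δ)
    (hs1 : 1 / 2 < s) (hs2 : s < (δ - 2) / 2) :
    ∃ m₀ > (2 : ℝ), ∀ m : ℝ, m₀ ≤ m → ∀ C > (0 : ℝ), ∃ τ₀ > (0 : ℝ), ∃ h₀ > (0 : ℝ),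
      ∀ h : ℝ, 0 < h → h ≤ h₀ → ∀ r : ℝ, 0 < r → r ≠ h ^ (-m) →
        AF s (τ₀ * h ^ (-(1 : ℝ) / 3)) (h ^ (-m)) r -
            C * BF δ s h (τ₀ * h ^ (-(1 : ℝ) / 3)) (h ^ (-m)) r ≥
          -(E / 2) * muD s (h ^ (-m)) r := by
  have hd : 0 < δ - 2 - 2*s := by linarith
  have hdinv : 0 < 1/(δ - 2 - 2*s) := by positivity
  refine ⟨3 + 1/(δ - 2 - 2*s), by linarith, ?_⟩
  intro m hm C hC
  set d : ℝ := δ - 2 - 2*s with hdd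
  set m₀ : ℝ := 3 + 1/d with hm₀
  have hm₀3 : (3:ℝ) ≤ m₀ := by rw [hm₀]; linarith
  set τ₀ : ℝ := (16*C) ^ ((1:ℝ)/3) + 1 with hτ₀def
  have hτ₀ : 0 < τ₀ := by positivity
  have hτ₀3 : 16*C ≤ τ₀^3 := by
    have h1 : ((16*C) ^ ((1:ℝ)/3))^(3:ℕ) = 16*C := by
      rw [← Real.rpow_natCast ((16*C) ^ ((1:ℝ)/3)) 3, ← Real.rpow_mul (by positivity)]
      norm_num
    have ht : 0 ≤ (16*C) ^ ((1:ℝ)/3) := Real.rpow_nonneg (by positivity) _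
    have hexp : τ₀^3 = ((16*C) ^ ((1:ℝ)/3))^(3:ℕ) + 3*((16*C) ^ ((1:ℝ)/3))^2
        + 3*((16*C) ^ ((1:ℝ)/3)) + 1 := by
      rw [hτ₀def]; ring
    rw [hexp, h1]
    linarith only [ht, sq_nonneg ((16*C) ^ ((1:ℝ)/3))]
  have hex5 : (0:ℝ) < 2*m₀*d - 2 := by
    have : 2*m₀*d - 2 = 6*d := by rw [hm₀]; field_simp; ring
    rw [this]; linarith
  clear_value d m₀
  clear_value τ₀
  have hc1 := ev_le' (K := 4*C*τ₀) (show (0:ℝ) < 2/3 by norm_num) hE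
  have hc2 := ev_le' (K := 2*τ₀^2) (show (0:ℝ) < m₀ - 2/3 by linarith)
    (show (0:ℝ) < E/3 by linarith)
  have hc3 := ev_le' (K := 2*C) (show (0:ℝ) < m₀ - 2 by linarith)
    (show (0:ℝ) < E/3 by linarith)
  have hc4 := ev_le' (K := 2*C*τ₀^2) (show (0:ℝ) < m₀/3 - 2/3 by linarith)
    (show (0:ℝ) < E/3 by linarith)
  have hs' : (0:ℝ) < 2*s - 1 := by linarith
  have hc5 := ev_le' (K := C) hex5 (show (0:ℝ) < E/2*(2*s-1)^2 by positivity)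
  have hone : ∀ᶠ h in nhdsWithin (0:ℝ) (Set.Ioi 0), h ≤ 1 :=
    (eventually_le_nhds zero_lt_one).filter_mono nhdsWithin_le_nhds
  have hall := hone.and (hc1.and (hc2.and (hc3.and (hc4.and hc5))))
  rcases mem_nhdsGT_iff_exists_Ioc_subset.1 hall with ⟨h₀, hh₀, hsub⟩
  refine ⟨τ₀, hτ₀, h₀, hh₀, ?_⟩
  intro h hh hhle r hr hrne
  obtain ⟨hh1, hC1, hC2, hC3, hC4, hC5⟩ := hsub ⟨hh, hhle⟩
  set a : ℝ := h ^ (-m) with hadef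
  set τ : ℝ := τ₀ * h ^ (-(1:ℝ)/3) with hτdef
  have ha0 : 0 < a := Real.rpow_pos_of_pos hh _
  have ha1 : 1 ≤ a :=
    Real.one_le_rpow_of_pos_of_le_one_of_nonpos hh hh1 (by linarith [hm, hm₀3])
  have hτ : 0 < τ := by
    rw [hτdef]; positivity
  have hhi : (0:ℝ) < h⁻¹ := by positivity
  have hτ3 : τ^3 = τ₀^3 * h⁻¹ := by
    rw [hτdef, mul_pow, ← Real.rpow_natCast (h ^ (-(1:ℝ)/3)) 3, ← Real.rpow_mul hh.le]
    norm_num [Real.rpow_neg_one]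
  have hτ2 : τ^2 = τ₀^2 * h ^ (-(2:ℝ)/3) := by
    rw [hτdef, mul_pow, ← Real.rpow_natCast (h ^ (-(1:ℝ)/3)) 2, ← Real.rpow_mul hh.le]
    norm_num
  have hτh : τ * h = τ₀ * h ^ ((2:ℝ)/3) := by
    rw [hτdef, mul_assoc]
    congr 1
    nth_rewrite 2 [show h = h ^ (1:ℝ) from (Real.rpow_one h).symm]
    rw [← Real.rpow_add hh]
    norm_num
  have hainv : a⁻¹ = h ^ m := by rw [hadef, Real.rpow_neg hh.le, inv_inv]
  clear_value a τ
  rcases hrne.lt_or_gt with hra | hra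
  · -- case r < a : reduce to the core lemma
    have ha10 : (0:ℝ) < a + 1 := by linarith
    have hcxm : (a+1)⁻¹ ≤ h ^ m := by
      rw [← hainv]; exact inv_anti₀ ha0 (by linarith)
    have hy0 : (0:ℝ) < h^(m/3) := Real.rpow_pos_of_pos hh _
    have y3 : (h^(m/3))^(3:ℕ) = h^m := by
      rw [← Real.rpow_natCast (h^(m/3)) 3, ← Real.rpow_mul hh.le]
      congr 1
      push_cast
      ring
    have hy3 : (a+1)⁻¹ ≤ (h^(m/3))^3 := by rw [y3]; exact hcxm
    have hτcube : 16*C*h⁻¹ ≤ τ^3 := by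
      rw [hτ3]; exact mul_le_mul_of_nonneg_right hτ₀3 hhi.le
    have hc1' : 4*C*(τ*h) ≤ E := by
      calc 4*C*(τ*h) = 4*C*τ₀*h^((2:ℝ)/3) := by rw [hτh]; ring
        _ ≤ E := hC1
    have hc2' : 2*τ^2*(a+1)⁻¹ ≤ E/3 := by
      have w1 : 2*τ^2*(a+1)⁻¹ ≤ 2*τ^2*h^m := by
        apply mul_le_mul_of_nonneg_left hcxm (by positivity)
      have w2 : 2*τ^2*h^m = 2*τ₀^2*h^(m-2/3) := by
        rw [hτ2, show 2*(τ₀^2*h^(-(2:ℝ)/3))*h^m = 2*τ₀^2*(h^(-(2:ℝ)/3)*h^m) from by ring,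
          ← Real.rpow_add hh, show -(2:ℝ)/3 + m = m - 2/3 from by ring]
      have w3 : h^(m-2/3:ℝ) ≤ h^(m₀-2/3:ℝ) :=
        Real.rpow_le_rpow_of_exponent_ge hh hh1 (by linarith only [hm])
      calc 2*τ^2*(a+1)⁻¹ ≤ 2*τ^2*h^m := w1
        _ = 2*τ₀^2*h^(m-2/3) := w2
        _ ≤ 2*τ₀^2*h^(m₀-2/3) := mul_le_mul_of_nonneg_left w3 (by positivity)
        _ ≤ E/3 := hC2
    have g4 : (h⁻¹)^2 = h^(-(2:ℝ)) := by
      rw [← Real.rpow_neg_one h, ← Real.rpow_natCast (h^(-(1:ℝ))) 2,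
        ← Real.rpow_mul hh.le]
      norm_num
    have hc3' : 2*C*((h⁻¹)^2*(a+1)⁻¹) ≤ E/3 := by
      have w1 : (h⁻¹)^2*(a+1)⁻¹ ≤ (h⁻¹)^2*h^m :=
        mul_le_mul_of_nonneg_left hcxm (by positivity)
      have w2 : (h⁻¹)^2*h^m = h^(m-2) := by
        rw [g4, ← Real.rpow_add hh, show -(2:ℝ) + m = m - 2 from by ring]
      have w3 : h^(m-2:ℝ) ≤ h^(m₀-2:ℝ) :=
        Real.rpow_le_rpow_of_exponent_ge hh hh1 (by linarith only [hm])
      calc 2*C*((h⁻¹)^2*(a+1)⁻¹) ≤ 2*C*((h⁻¹)^2*h^m) :=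
            mul_le_mul_of_nonneg_left w1 (by positivity)
        _ = 2*C*h^(m-2) := by rw [w2]
        _ ≤ 2*C*h^(m₀-2) := mul_le_mul_of_nonneg_left w3 (by positivity)
        _ ≤ E/3 := hC3
    have hc4' : 2*C*(τ^2*(h^(m/3))) ≤ E/3 := by
      have w1 : τ^2*(h^(m/3)) = τ₀^2*h^(m/3-2/3) := by
        rw [hτ2, mul_assoc, ← Real.rpow_add hh,
          show -(2:ℝ)/3 + m/3 = m/3 - 2/3 from by ring]
      have w2 : h^(m/3-2/3:ℝ) ≤ h^(m₀/3-2/3:ℝ) :=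
        Real.rpow_le_rpow_of_exponent_ge hh hh1 (by linarith only [hm])
      calc 2*C*(τ^2*(h^(m/3))) = 2*C*(τ₀^2*h^(m/3-2/3)) := by rw [w1]
        _ ≤ 2*C*(τ₀^2*h^(m₀/3-2/3)) := by
            apply mul_le_mul_of_nonneg_left _ (by positivity)
            exact mul_le_mul_of_nonneg_left w2 (by positivity)
        _ = 2*C*τ₀^2*h^(m₀/3-2/3) := by ring
        _ ≤ E/3 := hC4
    exact case_lt_core E C δ s h τ a (h^(m/3)) hE hC hδ hh hτ ha1 hy0 hy3
      hτcube hc1' hc2' hc3' hc4' r hr hra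
  · -- case a < r
    have hx0 : (0:ℝ) < r + 1 := by linarith
    have hxa1 : (1:ℝ) ≤ a + 1 := by linarith
    have hxa : a + 1 ≤ r + 1 := by linarith
    have hmuD : muD s a r = (2*s-1) * (r+1) ^ (-(2*s)) := if_neg (not_lt.2 hra.le)
    have hx2s : (0:ℝ) < (r+1) ^ (-(2*s)) := Real.rpow_pos_of_pos hx0 _
    have hmu' : (0:ℝ) < (2*s-1) * (r+1) ^ (-(2*s)) := by positivity
    have hphiD : phiD τ a r = 0 := if_neg (not_le.2 hra)
    have hphiDD : phiDD τ a r = 0 := if_neg (not_lt.2 hra.le)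
    have hBF : BF δ s h τ a r =
        (muF s a r * (h⁻¹ * (r+1) ^ (-δ)))^2 / ((2*s-1) * (r+1) ^ (-(2*s))) := by
      rw [BF, hphiD, hphiDD, hmuD]
      simp
    have hmuF_le : muF s a r ≤ (a+1)^2 := by
      rw [muF, if_neg (not_le.2 hra)]
      have h1 : (a+1) ^ (-(2*s)+1) ≤ 1 :=
        Real.rpow_le_one_of_one_le_of_nonpos hxa1 (by linarith)
      have h2 : 0 ≤ (r+1) ^ (-(2*s)+1) := Real.rpow_nonneg (by linarith) _
      linarith
    have hmuF_nonneg : 0 ≤ muF s a r := by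
      rw [muF, if_neg (not_le.2 hra)]
      have h1 : (r+1) ^ (-(2*s)+1) ≤ (a+1) ^ (-(2*s)+1) :=
        Real.rpow_le_rpow_of_nonpos (by linarith) hxa (by linarith)
      have h2 : (1:ℝ) ≤ (a+1)^2 := by
        have h3 : (1:ℝ) ≤ a+1 := by linarith
        calc (1:ℝ) = 1*1 := by ring
          _ ≤ (a+1)*(a+1) := by gcongr <;> linarith
          _ = (a+1)^2 := by ring
      linarith [h1, h2]
    have hp0 : (0:ℝ) ≤ h⁻¹ * (r+1) ^ (-δ) := by positivity
    -- the scalar bound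
    have hsc : C*((a+1)^2)^2*(h⁻¹)^2*((a+1)^(4*s-2*δ)) ≤ E/2*(2*s-1)^2 := by
      have g1 : ((a+1)^2)^2 * ((a+1)^(4*s-2*δ)) = (a+1)^(4+(4*s-2*δ)) := by
        rw [← pow_mul, show (2*2 = 4) from rfl, ← Real.rpow_natCast (a+1) 4,
          ← Real.rpow_add (by linarith : (0:ℝ) < a+1)]
        norm_num
      have g2 : (a+1)^(4+(4*s-2*δ)) ≤ a^(4+(4*s-2*δ)) :=
        Real.rpow_le_rpow_of_nonpos ha0 (by linarith) (by linarith)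
      have g3 : a^(4+(4*s-2*δ)) = h^(-m*(4+(4*s-2*δ))) := by
        rw [hadef, ← Real.rpow_mul hh.le]
      have g4 : (h⁻¹)^2 = h^(-(2:ℝ)) := by
        rw [← Real.rpow_neg_one h, ← Real.rpow_natCast (h^(-(1:ℝ))) 2, ← Real.rpow_mul hh.le]
        norm_num
      have g5 : h^(-m*(4+(4*s-2*δ))) * h^(-(2:ℝ)) = h^(2*m*d-2) := by
        rw [← Real.rpow_add hh]
        congr 1
        rw [hdd]; ring
      have g6 : h^(2*m*d-2) ≤ h^(2*m₀*d-2) := by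
        have h3 : 0 ≤ (m - m₀)*d := mul_nonneg (by linarith) hd.le
        exact Real.rpow_le_rpow_of_exponent_ge hh hh1 (by linarith only [h3])
      calc C*((a+1)^2)^2*(h⁻¹)^2*((a+1)^(4*s-2*δ))
          = C*(h⁻¹)^2*(((a+1)^2)^2*((a+1)^(4*s-2*δ))) := by ring
        _ ≤ C*(h⁻¹)^2*(a^(4+(4*s-2*δ))) := by
            rw [g1]; gcongr
        _ = C*(h^(-m*(4+(4*s-2*δ))) * h^(-(2:ℝ))) := by rw [g3, g4]; ring
        _ = C*h^(2*m*d-2) := by rw [g5]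
        _ ≤ C*h^(2*m₀*d-2) := mul_le_mul_of_nonneg_left g6 hC.le
        _ ≤ E/2*(2*s-1)^2 := hC5
    have e1 : ((r+1)^(-δ))^2 = ((r+1)^(-(2*s)))^2 * (r+1)^(4*s-2*δ) := by
      rw [← Real.rpow_natCast ((r+1)^(-δ)) 2, ← Real.rpow_natCast ((r+1)^(-(2*s))) 2,
        ← Real.rpow_mul hx0.le, ← Real.rpow_mul hx0.le, ← Real.rpow_add hx0]
      congr 1
      push_cast
      ring
    have e2 : (r+1)^(4*s-2*δ) ≤ (a+1)^(4*s-2*δ) :=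
      Real.rpow_le_rpow_of_nonpos (by linarith) hxa (by linarith)
    have hkey : C * ((a+1)^2 * (h⁻¹ * (r+1)^(-δ)))^2 ≤
        E/2 * ((2*s-1)*(r+1)^(-(2*s)))^2 := by
      calc C * ((a+1)^2 * (h⁻¹ * (r+1)^(-δ)))^2
          = (C*((a+1)^2)^2*(h⁻¹)^2*((r+1)^(4*s-2*δ))) * ((r+1)^(-(2*s)))^2 := by
            rw [mul_pow, mul_pow, e1]; ring
        _ ≤ (C*((a+1)^2)^2*(h⁻¹)^2*((a+1)^(4*s-2*δ))) * ((r+1)^(-(2*s)))^2 := by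
            gcongr
        _ ≤ (E/2*(2*s-1)^2) * ((r+1)^(-(2*s)))^2 := by
            gcongr
        _ = E/2 * ((2*s-1)*(r+1)^(-(2*s)))^2 := by ring
    have hBFle : C * BF δ s h τ a r ≤ E/2 * ((2*s-1)*(r+1)^(-(2*s))) := by
      rw [hBF]
      have step1 : C * ((muF s a r * (h⁻¹ * (r+1) ^ (-δ)))^2 / ((2*s-1) * (r+1) ^ (-(2*s))))
          = (C * (muF s a r * (h⁻¹ * (r+1) ^ (-δ)))^2) / ((2*s-1) * (r+1) ^ (-(2*s))) := by
        ring
      rw [step1, div_le_iff₀ hmu']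
      have hnum : (muF s a r * (h⁻¹ * (r+1) ^ (-δ)))^2 ≤
          ((a+1)^2 * (h⁻¹ * (r+1)^(-δ)))^2 := by
        have := mul_le_mul_of_nonneg_right hmuF_le hp0
        have h0' := mul_nonneg hmuF_nonneg hp0
        exact pow_le_pow_left₀ h0' this 2
      calc C * (muF s a r * (h⁻¹ * (r+1) ^ (-δ)))^2
          ≤ C * ((a+1)^2 * (h⁻¹ * (r+1)^(-δ)))^2 := by gcongr
        _ ≤ E/2 * ((2*s-1)*(r+1)^(-(2*s)))^2 := hkey
        _ = E/2 * ((2*s-1)*(r+1)^(-(2*s))) * ((2*s-1)*(r+1)^(-(2*s))) := by ring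
    rw [AF_gt' hra, hmuD]
    linarith [hBFle]
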